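/- arXiv:1611.07407 — 7 statements merged into one kernel-verified Lean document; each statement's English description precedes it below -/
import Mathlib

section
/- Let G be a simple undirected graph with vertex set {1,...,n} and Seidel adjacency matrix S(G). A bipartition {X,Y} of {1,...,n} is a bi-join of G if and only if both submatrices S(G)[X,Y] and S(G)[Y,X] have rank at most 1. -/
open Matrix Finset

/-- Rank of the submatrix of `A` with row indices in `X` and column indices in `Y`. -/
noncomputable def subRank {n : ℕ} {K : Type*} [Field K] (A : Matrix (Fin n) (Fin n) K)
    (X Y : Finset (Fin n)) : ℕ :=
  (A.submatrix (fun i : {a // a ∈ X} => i.1) (fun j : {a // a ∈ Y} => j.1)).rank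

/-- The Seidel adjacency matrix of a graph: `0` on the diagonal, `-1` for edges and
`+1` for non-edges. -/
def seidel {n : ℕ} (G : SimpleGraph (Fin n)) [DecidableRel G.Adj] :
    Matrix (Fin n) (Fin n) ℚ :=
  fun i j => if i = j then 0 else if G.Adj i j then -1 else 1

lemma seidel_transpose {n : ℕ} (G : SimpleGraph (Fin n)) [DecidableRel G.Adj] :
    (seidel G)ᵀ = seidel G := by
  ext i j
  simp only [transpose_apply, seidel]
  by_cases h : i = j
  · simp [h]
  · simp [h, Ne.symm h, G.adj_comm i j]

lemma seidel_apply_of_ne {n : ℕ} (G : SimpleGraph (Fin n)) [DecidableRel G.Adj]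
    {i j : Fin n} (h : i ≠ j) : seidel G i j = if G.Adj i j then -1 else 1 := by
  simp [seidel, h]

/-- A bipartition `{X, Y}` of the vertex set of a graph `G` is a bi-join of `G` if and only
if both off-diagonal blocks `S(G)[X,Y]` and `S(G)[Y,X]` of the Seidel adjacency matrix
have rank at most `1`. -/
theorem bijoin_iff_HL_bipartition_seidel {n : ℕ} (G : SimpleGraph (Fin n))
    [DecidableRel G.Adj] (X Y : Finset (Fin n)) (hX : X.Nonempty) (hY : Y.Nonempty)
    (hD : Disjoint X Y) (hU : X ∪ Y = Finset.univ) :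
    (∃ X1 ⊆ X, ∃ Y1 ⊆ Y,
        (∀ x ∈ X1, G.neighborFinset x ∩ Y = Y1) ∧
        (∀ x ∈ X \ X1, G.neighborFinset x ∩ Y = Y \ Y1)) ↔
      subRank (seidel G) X Y ≤ 1 ∧ subRank (seidel G) Y X ≤ 1 := by
  classical
  set M : Matrix {a // a ∈ X} {a // a ∈ Y} ℚ :=
    (seidel G).submatrix (fun i : {a // a ∈ X} => i.1) (fun j : {a // a ∈ Y} => j.1) with hM
  have hne : ∀ (x : {a // a ∈ X}) (y : {a // a ∈ Y}), x.1 ≠ y.1 := by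
    rintro ⟨x, hx⟩ ⟨y, hy⟩ rfl
    exact (Finset.disjoint_left.mp hD hx) hy
  have hMentry : ∀ (x : {a // a ∈ X}) (y : {a // a ∈ Y}),
      M x y = if G.Adj x.1 y.1 then -1 else 1 := by
    intro x y
    simp only [hM, submatrix_apply]
    exact seidel_apply_of_ne G (hne x y)
  -- the Y,X block is the transpose of the X,Y block
  have hsymm : subRank (seidel G) Y X = subRank (seidel G) X Y := by
    unfold subRank
    rw [← Matrix.rank_transpose ((seidel G).submatrix
      (fun i : {a // a ∈ Y} => i.1) (fun j : {a // a ∈ X} => j.1))]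
    rw [Matrix.transpose_submatrix, seidel_transpose]
  rw [hsymm, and_self]
  have hrank : subRank (seidel G) X Y = M.rank := rfl
  constructor
  · rintro ⟨X1, hX1, Y1, hY1, h1, h2⟩
    -- rows are ±v where v is determined by Y1
    set v : {a // a ∈ Y} → ℚ := fun y => if y.1 ∈ Y1 then -1 else 1 with hv
    have hrow : ∀ x : {a // a ∈ X}, M x = v ∨ M x = (-1 : ℚ) • v := by
      intro x
      by_cases hx1 : x.1 ∈ X1
      · left
        funext y
        have h := h1 x.1 hx1
        have hadj : G.Adj x.1 y.1 ↔ y.1 ∈ Y1 := by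
          constructor
          · intro ha
            rw [← h]
            exact Finset.mem_inter.mpr ⟨(G.mem_neighborFinset _ _).mpr ha, y.2⟩
          · intro hy
            rw [← h] at hy
            exact (G.mem_neighborFinset _ _).mp (Finset.mem_inter.mp hy).1
        rw [hMentry x y, hv]
        by_cases hy1 : y.1 ∈ Y1 <;> simp [hy1, hadj]
      · right
        funext y
        have h := h2 x.1 (Finset.mem_sdiff.mpr ⟨x.2, hx1⟩)
        have hadj : G.Adj x.1 y.1 ↔ y.1 ∉ Y1 := by
          constructor
          · intro ha
            have : y.1 ∈ Y \ Y1 := by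
              rw [← h]
              exact Finset.mem_inter.mpr ⟨(G.mem_neighborFinset _ _).mpr ha, y.2⟩
            exact (Finset.mem_sdiff.mp this).2
          · intro hy
            have : y.1 ∈ G.neighborFinset x.1 ∩ Y := by
              rw [h]; exact Finset.mem_sdiff.mpr ⟨y.2, hy⟩
            exact (G.mem_neighborFinset _ _).mp (Finset.mem_inter.mp this).1
        rw [hMentry x y, hv]
        by_cases hy1 : y.1 ∈ Y1 <;> simp [hy1, hadj]
    rw [hrank, Matrix.rank_eq_finrank_span_row]
    have hle : Submodule.span ℚ (Set.range M) ≤ Submodule.span ℚ {v} := by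
      rw [Submodule.span_le]
      rintro _ ⟨x, rfl⟩
      rcases hrow x with h | h
      · rw [h]; exact Submodule.subset_span rfl
      · rw [h]
        exact Submodule.smul_mem _ _ (Submodule.subset_span rfl)
    calc Module.finrank ℚ (Submodule.span ℚ (Set.range M))
        ≤ Module.finrank ℚ (Submodule.span ℚ ({v} : Set _)) := Submodule.finrank_mono hle
      _ ≤ 1 := by
          calc Module.finrank ℚ (Submodule.span ℚ ({v} : Set _))
              ≤ ({v} : Set _).toFinset.card := finrank_span_le_card _
            _ = 1 := by simp
  · intro hrk
    obtain ⟨x0, hx0⟩ := hX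
    obtain ⟨y0, hy0⟩ := hY
    set Y1 : Finset (Fin n) := G.neighborFinset x0 ∩ Y with hY1def
    set X1 : Finset (Fin n) := X.filter (fun x => G.neighborFinset x ∩ Y = Y1) with hX1def
    refine ⟨X1, Finset.filter_subset _ _, Y1, Finset.inter_subset_right, ?_, ?_⟩
    · intro x hx
      exact (Finset.mem_filter.mp hx).2
    · intro x hx
      obtain ⟨hxX, hxn⟩ := Finset.mem_sdiff.mp hx
      have hxn' : ¬(G.neighborFinset x ∩ Y = Y1) := fun h =>
        hxn (Finset.mem_filter.mpr ⟨hxX, h⟩)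
      -- rows of M span a space of dim ≤ 1; the row of x0 is nonzero
      have hr0ne : M ⟨x0, hx0⟩ ≠ 0 := by
        intro h
        have := congrFun h ⟨y0, hy0⟩
        rw [hMentry ⟨x0, hx0⟩ ⟨y0, hy0⟩] at this
        by_cases ha : G.Adj x0 y0 <;> simp [ha] at this
      have hspan : Submodule.span ℚ {M ⟨x0, hx0⟩} = Submodule.span ℚ (Set.range M) := by
        apply Submodule.eq_of_le_of_finrank_le
        · exact Submodule.span_mono (Set.singleton_subset_iff.mpr ⟨⟨x0, hx0⟩, rfl⟩)
        · rw [show Module.finrank ℚ (Submodule.span ℚ (Set.range M)) = M.rank from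
            (Matrix.rank_eq_finrank_span_row M).symm, ← hrank]
          rw [finrank_span_singleton hr0ne]
          exact hrk
      have hmem : M ⟨x, hxX⟩ ∈ Submodule.span ℚ {M ⟨x0, hx0⟩} := by
        rw [hspan]
        exact Submodule.subset_span ⟨⟨x, hxX⟩, rfl⟩
      obtain ⟨c, hc⟩ := Submodule.mem_span_singleton.mp hmem
      -- determine c from entry at y0
      have hc' : ∀ y : {a // a ∈ Y}, M ⟨x, hxX⟩ y = c * M ⟨x0, hx0⟩ y := by
        intro y
        rw [← hc]
        simp
      have habs : ∀ (i : {a // a ∈ X}) (j : {a // a ∈ Y}), M i j = 1 ∨ M i j = -1 := by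
        intro i j
        rw [hMentry i j]
        by_cases h : G.Adj i.1 j.1 <;> simp [h]
      have hcval : c = 1 ∨ c = -1 := by
        have h := hc' ⟨y0, hy0⟩
        rcases habs ⟨x, hxX⟩ ⟨y0, hy0⟩ with h1 | h1 <;>
          rcases habs ⟨x0, hx0⟩ ⟨y0, hy0⟩ with h2 | h2 <;>
          rw [h1, h2] at h <;> [left; right; right; left] <;> linarith
      rcases hcval with rfl | rfl
      · -- c = 1 : rows equal, contradiction with x ∉ X1
        exfalso
        apply hxn'
        ext y
        simp only [Finset.mem_inter, hY1def]
        constructor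
        · rintro ⟨hny, hyY⟩
          have h := hc' ⟨y, hyY⟩
          rw [hMentry, hMentry] at h
          have hady : G.Adj x y := (G.mem_neighborFinset _ _).mp hny
          simp only [hady, if_true, one_mul] at h
          refine ⟨(G.mem_neighborFinset _ _).mpr ?_, hyY⟩
          by_contra hna
          simp only [hna, if_false] at h; norm_num at h
        · rintro ⟨hny, hyY⟩
          have h := hc' ⟨y, hyY⟩
          rw [hMentry, hMentry] at h
          have hady : G.Adj x0 y := (G.mem_neighborFinset _ _).mp hny
          simp only [hady, if_true, one_mul] at h
          refine ⟨(G.mem_neighborFinset _ _).mpr ?_, hyY⟩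
          by_contra hna
          simp only [hna, if_false] at h; norm_num at h
      · -- c = -1 : adjacency flipped
        ext y
        simp only [Finset.mem_inter, Finset.mem_sdiff, hY1def]
        constructor
        · rintro ⟨hny, hyY⟩
          have h := hc' ⟨y, hyY⟩
          rw [hMentry, hMentry] at h
          have hady : G.Adj x y := (G.mem_neighborFinset _ _).mp hny
          simp only [hady, if_true] at h
          refine ⟨hyY, fun hmem => ?_⟩
          have hady0 : G.Adj x0 y :=
            (G.mem_neighborFinset _ _).mp hmem.1
          simp only [hady0, if_true] at h; norm_num at h
        · rintro ⟨hyY, hnmem⟩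
          have h := hc' ⟨y, hyY⟩
          rw [hMentry, hMentry] at h
          have hnady0 : ¬ G.Adj x0 y := by
            intro ha
            exact hnmem ⟨(G.mem_neighborFinset _ _).mpr ha, hyY⟩
          simp only [hnady0, if_false] at h
          refine ⟨(G.mem_neighborFinset _ _).mpr ?_, hyY⟩
          by_contra hna
          simp only [hna, if_false] at h; norm_num at h
end

section
/- Let T be a tournament with vertex set {1,...,n} and Seidel adjacency matrix S(T) (with s_ii=0, s_ij=1 if i→j, s_ij=-1 if j→i). A bipartition {X,Y} of {1,...,n} is a bi-join of T if and only if both submatrices S(T)[X,Y] and S(T)[Y,X] have rank at most 1. -/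
open Matrix Finset

/-- The Seidel adjacency matrix of a tournament `T`: `0` on the diagonal, `1` if `i → j`
and `-1` if `j → i`. -/
def seidelT {n : ℕ} (T : Fin n → Fin n → Prop) [DecidableRel T] :
    Matrix (Fin n) (Fin n) ℚ :=
  fun i j => if i = j then 0 else if T i j then 1 else -1

lemma myRank_vecMulVec_le_one {m n : Type*} [Fintype m] [Fintype n]
    (u : m → ℚ) (v : n → ℚ) : (Matrix.vecMulVec u v).rank ≤ 1 := by
  rw [Matrix.vecMulVec_eq Unit]
  refine (Matrix.rank_mul_le_right _ _).trans ?_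
  simpa using Matrix.rank_le_card_height (Matrix.replicateRow Unit v)

lemma myMinor_eq_zero {m n : Type*} [Fintype m] [Fintype n] (A : Matrix m n ℚ)
    (h : A.rank ≤ 1) (i i' : m) (j j' : n) :
    A i j * A i' j' = A i j' * A i' j := by
  rw [Matrix.rank_eq_finrank_span_row] at h
  obtain ⟨v, hv⟩ := finrank_le_one_iff.mp h
  obtain ⟨c, hc⟩ := hv ⟨A i, Submodule.subset_span ⟨i, rfl⟩⟩
  obtain ⟨c', hc'⟩ := hv ⟨A i', Submodule.subset_span ⟨i', rfl⟩⟩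
  have h1 : A i = c • (v : n → ℚ) := by
    have := congrArg Subtype.val hc; simpa using this.symm
  have h2 : A i' = c' • (v : n → ℚ) := by
    have := congrArg Subtype.val hc'; simpa using this.symm
  have e1 := congrFun h1 j
  have e2 := congrFun h1 j'
  have e3 := congrFun h2 j
  have e4 := congrFun h2 j'
  simp only [Pi.smul_apply, smul_eq_mul] at e1 e2 e3 e4
  rw [e1, e2, e3, e4]; ring

lemma myPm (a b c d : Prop) [Decidable a] [Decidable b] [Decidable c] [Decidable d]
    (h : (if a then (1:ℚ) else -1) * (if d then 1 else -1) =
      (if c then (1:ℚ) else -1) * (if b then 1 else -1)) : ((a ↔ b) ↔ (c ↔ d)) := by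
  by_cases ha : a <;> by_cases hb : b <;> by_cases hc : c <;> by_cases hd : d <;>
    simp_all <;> norm_num at h

/-- A bipartition `{X, Y}` of the vertex set of a tournament `T` is a bi-join of `T` if and
only if both off-diagonal blocks `S(T)[X,Y]` and `S(T)[Y,X]` of the Seidel adjacency matrix
have rank at most `1`. -/
theorem tournament_bijoin_iff_HL_bipartition_seidel {n : ℕ}
    (T : Fin n → Fin n → Prop) [DecidableRel T]
    (hT : ∀ i j : Fin n, i ≠ j → (T i j ↔ ¬ T j i))
    (X Y : Finset (Fin n)) (hX : X.Nonempty) (hY : Y.Nonempty)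
    (hD : Disjoint X Y) (hU : X ∪ Y = Finset.univ) :
    (∃ X1 ⊆ X, ∃ Y1 ⊆ Y,
        (∀ x ∈ X1, Y.filter (fun y => T x y) = Y1 ∧ Y.filter (fun y => T y x) = Y \ Y1) ∧
        (∀ x ∈ X \ X1, Y.filter (fun y => T x y) = Y \ Y1 ∧ Y.filter (fun y => T y x) = Y1)) ↔
      subRank (seidelT T) X Y ≤ 1 ∧ subRank (seidelT T) Y X ≤ 1 := by
  obtain ⟨x0, hx0⟩ := hX
  obtain ⟨y0, hy0⟩ := hY
  have hne : ∀ x ∈ X, ∀ y ∈ Y, x ≠ y := by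
    intro x hx y hy h
    exact (Finset.disjoint_left.mp hD hx) (h ▸ hy)
  have hentryXY : ∀ x ∈ X, ∀ y ∈ Y, seidelT T x y = if T x y then 1 else -1 := by
    intro x hx y hy
    simp [seidelT, hne x hx y hy]
  have hentryYX : ∀ x ∈ X, ∀ y ∈ Y, seidelT T y x = if T x y then -1 else 1 := by
    intro x hx y hy
    have hiff := hT y x (hne x hx y hy).symm
    by_cases ht : T x y <;> simp [seidelT, (hne x hx y hy).symm, hiff, ht]
  constructor
  · rintro ⟨X1, hX1, Y1, hY1, h1, h2⟩
    have hiff : ∀ x ∈ X, ∀ y ∈ Y, (T x y ↔ (x ∈ X1 ↔ y ∈ Y1)) := by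
      intro x hx y hy
      by_cases hx1 : x ∈ X1
      · have hf := (h1 x hx1).1
        have : T x y ↔ y ∈ Y1 := by rw [← hf]; simp [Finset.mem_filter, hy]
        simp [hx1, this]
      · have hf := (h2 x (Finset.mem_sdiff.mpr ⟨hx, hx1⟩)).1
        have h' : T x y ↔ y ∈ Y \ Y1 := by
          rw [← hf]; simp [Finset.mem_filter, hy]
        have : T x y ↔ y ∉ Y1 := by rw [h']; simp [Finset.mem_sdiff, hy]
        simp [hx1, this]
    constructor
    · unfold subRank
      have hEq : (seidelT T).submatrix (fun i : {a // a ∈ X} => i.1)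
          (fun j : {a // a ∈ Y} => j.1)
          = Matrix.vecMulVec (fun x : {a // a ∈ X} => if x.1 ∈ X1 then (1:ℚ) else -1)
            (fun y : {a // a ∈ Y} => if y.1 ∈ Y1 then (1:ℚ) else -1) := by
        ext x y
        rw [Matrix.submatrix_apply, Matrix.vecMulVec_apply, hentryXY x.1 x.2 y.1 y.2]
        by_cases hx1 : x.1 ∈ X1 <;> by_cases hy1 : y.1 ∈ Y1 <;>
          simp [hx1, hy1, hiff x.1 x.2 y.1 y.2]
      rw [hEq]
      exact myRank_vecMulVec_le_one _ _
    · unfold subRank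
      have hEq : (seidelT T).submatrix (fun i : {a // a ∈ Y} => i.1)
          (fun j : {a // a ∈ X} => j.1)
          = Matrix.vecMulVec (fun y : {a // a ∈ Y} => if y.1 ∈ Y1 then (1:ℚ) else -1)
            (fun x : {a // a ∈ X} => if x.1 ∈ X1 then (-1:ℚ) else 1) := by
        ext y x
        rw [Matrix.submatrix_apply, Matrix.vecMulVec_apply, hentryYX x.1 x.2 y.1 y.2]
        by_cases hx1 : x.1 ∈ X1 <;> by_cases hy1 : y.1 ∈ Y1 <;>
          simp [hx1, hy1, hiff x.1 x.2 y.1 y.2]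
      rw [hEq]
      exact myRank_vecMulVec_le_one _ _
  · rintro ⟨hr1, -⟩
    have hr1' : ((seidelT T).submatrix (fun i : {a // a ∈ X} => i.1)
        (fun j : {a // a ∈ Y} => j.1)).rank ≤ 1 := hr1
    have hminor : ∀ x ∈ X, ∀ y ∈ Y,
        seidelT T x y * seidelT T x0 y0 = seidelT T x y0 * seidelT T x0 y := by
      intro x hx y hy
      exact myMinor_eq_zero _ hr1' ⟨x, hx⟩ ⟨x0, hx0⟩ ⟨y, hy⟩ ⟨y0, hy0⟩
    have hiff2 : ∀ x ∈ X, ∀ y ∈ Y, ((T x y ↔ T x0 y) ↔ (T x y0 ↔ T x0 y0)) := by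
      intro x hx y hy
      apply myPm
      have hm := hminor x hx y hy
      rwa [hentryXY x hx y hy, hentryXY x hx y0 hy0, hentryXY x0 hx0 y hy,
        hentryXY x0 hx0 y0 hy0] at hm
    refine ⟨X.filter (fun x => T x y0 ↔ T x0 y0), Finset.filter_subset _ _,
      Y.filter (fun y => T x0 y), Finset.filter_subset _ _, ?_, ?_⟩
    · intro x hx
      obtain ⟨hxX, hx1⟩ := Finset.mem_filter.mp hx
      have hrow : ∀ y ∈ Y, (T x y ↔ T x0 y) := fun y hy => (hiff2 x hxX y hy).mpr hx1
      have hskew : ∀ y ∈ Y, (T y x ↔ ¬ T x y) := fun y hy => hT y x (hne x hxX y hy).symm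
      constructor
      · ext y
        simp only [Finset.mem_filter]
        by_cases hy : y ∈ Y
        · have ha := hrow y hy; tauto
        · tauto
      · ext y
        simp only [Finset.mem_filter, Finset.mem_sdiff]
        by_cases hy : y ∈ Y
        · have ha := hrow y hy; have hb := hskew y hy; tauto
        · tauto
    · intro x hx
      obtain ⟨hxX, hx1⟩ := Finset.mem_sdiff.mp hx
      have hx1' : ¬ (T x y0 ↔ T x0 y0) := fun h => hx1 (Finset.mem_filter.mpr ⟨hxX, h⟩)
      have hrow : ∀ y ∈ Y, (T x y ↔ ¬ T x0 y) := by
        intro y hy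
        have := hiff2 x hxX y hy
        tauto
      have hskew : ∀ y ∈ Y, (T y x ↔ ¬ T x y) := fun y hy => hT y x (hne x hxX y hy).symm
      constructor
      · ext y
        simp only [Finset.mem_filter, Finset.mem_sdiff]
        by_cases hy : y ∈ Y
        · have ha := hrow y hy; tauto
        · tauto
      · ext y
        simp only [Finset.mem_filter]
        by_cases hy : y ∈ Y
        · have ha := hrow y hy; have hb := hskew y hy; tauto
        · tauto
end

section
/- Let A be a v-normalized n×n matrix over a field K (i.e., a_vj = a_jv = 1 for all j ≠ v) and let I ⊆ [n]∖{v}. Then {I, [n]∖I} is an HL-bipartition of A if and only if I is a clan of the labelled 2-structure g_A restricted to [n]∖{v}. -/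
open Matrix Finset

/-- A matrix all of whose rows are equal has rank at most `1`. -/
lemma rank_le_one_of_rows_eq {m l K : Type*} [Fintype m] [Fintype l] [Field K]
    (M : Matrix m l K) (h : ∀ i i' j, M i j = M i' j) : M.rank ≤ 1 := by
  classical
  rw [Matrix.rank]
  have hsub : LinearMap.range M.mulVecLin ≤
      Submodule.span K {(fun _ => (1 : K) : m → K)} := by
    rintro y ⟨x, rfl⟩
    rcases isEmpty_or_nonempty m with hm | hm
    · have : M.mulVecLin x = 0 := Subsingleton.elim _ _
      rw [this]; exact Submodule.zero_mem _
    · obtain ⟨i₀⟩ := hm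
      have : M.mulVecLin x = (∑ j, M i₀ j * x j) • (fun _ => (1 : K)) := by
        funext i
        simp only [Matrix.mulVecLin_apply, Matrix.mulVec, dotProduct, Pi.smul_apply,
          smul_eq_mul, mul_one]
        exact Finset.sum_congr rfl fun j _ => by rw [h i i₀ j]
      rw [this]
      exact Submodule.smul_mem _ _ (Submodule.mem_span_singleton_self _)
  calc Module.finrank K (LinearMap.range M.mulVecLin)
      ≤ Module.finrank K (Submodule.span K {(fun _ => (1 : K) : m → K)}) :=
        Submodule.finrank_mono hsub
    _ ≤ 1 := by
        rcases eq_or_ne (fun _ => (1 : K) : m → K) 0 with h0 | h0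
        · rw [h0, Submodule.span_zero_singleton]; simp
        · rw [finrank_span_singleton h0]

/-- If a matrix has rank at most one and one of its columns is constantly `1`,
then all its rows are equal. -/
lemma rows_eq_of_rank_le_one {m l K : Type*} [Fintype m] [Fintype l] [Field K]
    (M : Matrix m l K) (j₀ : l) (h1 : ∀ i, M i j₀ = 1) (hr : M.rank ≤ 1) :
    ∀ i i' j, M i j = M i' j := by
  classical
  intro a b x
  rw [Matrix.rank] at hr
  obtain ⟨w, hw⟩ := finrank_le_one_iff.mp hr
  have hones : (fun i => M i j₀) ∈ LinearMap.range M.mulVecLin := by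
    refine ⟨Pi.single j₀ 1, ?_⟩
    funext i
    simp [Matrix.mulVecLin_apply, Matrix.mulVec, dotProduct, Pi.single_apply,
      Finset.sum_ite_eq]
  have hcol : (fun i => M i x) ∈ LinearMap.range M.mulVecLin := by
    refine ⟨Pi.single x 1, ?_⟩
    funext i
    simp [Matrix.mulVecLin_apply, Matrix.mulVec, dotProduct, Pi.single_apply,
      Finset.sum_ite_eq]
  obtain ⟨c, hc⟩ := hw ⟨_, hones⟩
  obtain ⟨d, hd⟩ := hw ⟨_, hcol⟩
  have hc' : c • (w : m → K) = fun i => M i j₀ := congrArg Subtype.val hc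
  have hd' : d • (w : m → K) = fun i => M i x := congrArg Subtype.val hd
  have hcne : c ≠ 0 := by
    intro h0
    rw [h0, zero_smul] at hc'
    have := congrFun hc'.symm a
    rw [h1 a] at this
    exact one_ne_zero this
  have hwc : (w : m → K) = c⁻¹ • (fun i => M i j₀) := by
    rw [← hc', smul_smul, inv_mul_cancel₀ hcne, one_smul]
  have hval : ∀ i, M i x = d * c⁻¹ := by
    intro i
    have := congrFun hd' i
    rw [hwc] at this
    simp only [Pi.smul_apply, smul_eq_mul, h1 i, mul_one] at this
    rw [← this, mul_comm]  -- careful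
  rw [hval a, hval b]

/-- Let `A` be a `v`-normalized `n × n` matrix over a field `K` and `I ⊆ [n] \ {v}`.
Then `{I, [n] \ I}` is an HL-bipartition of `A` (both off-diagonal blocks have rank at
most `1`) if and only if `I` is a clan of the labelled 2-structure `g_A` restricted to
`[n] \ {v}`. -/
theorem HL_bipartition_iff_clan_of_normalized {n : ℕ} {K : Type*} [Field K]
    (A : Matrix (Fin n) (Fin n) K) (v : Fin n)
    (hnorm : ∀ j, j ≠ v → A v j = 1 ∧ A j v = 1)
    (I : Finset (Fin n)) (hI : I ⊆ {v}ᶜ) :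
    (subRank A I Iᶜ ≤ 1 ∧ subRank A Iᶜ I ≤ 1) ↔
      (∀ a ∈ I, ∀ b ∈ I, ∀ x ∈ ({v}ᶜ : Finset (Fin n)) \ I,
        A a x = A b x ∧ A x a = A x b) := by
  classical
  have hvI : v ∉ I := fun hv => by simpa using hI hv
  have hmemI : ∀ i : Fin n, i ∈ I → i ≠ v := fun i hi => by
    have := hI hi; simpa using this
  have hvc : v ∈ Iᶜ := Finset.mem_compl.mpr hvI
  constructor
  · rintro ⟨h1, h2⟩ a ha b hb x hx
    rw [Finset.mem_sdiff, Finset.mem_compl, Finset.mem_singleton] at hx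
    have hxc : x ∈ Iᶜ := Finset.mem_compl.mpr hx.2
    constructor
    · have := rows_eq_of_rank_le_one
        (A.submatrix (fun i : {a // a ∈ I} => i.1) (fun j : {a // a ∈ Iᶜ} => j.1))
        ⟨v, hvc⟩ (fun i => (hnorm i.1 (hmemI i.1 i.2)).2) h1
        ⟨a, ha⟩ ⟨b, hb⟩ ⟨x, hxc⟩
      simpa using this
    · have hT : ((A.submatrix (fun i : {a // a ∈ Iᶜ} => i.1)
          (fun j : {a // a ∈ I} => j.1))ᵀ).rank ≤ 1 := by
        rw [Matrix.rank_transpose]; exact h2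
      have := rows_eq_of_rank_le_one
        ((A.submatrix (fun i : {a // a ∈ Iᶜ} => i.1) (fun j : {a // a ∈ I} => j.1))ᵀ)
        ⟨v, hvc⟩ (fun i => (hnorm i.1 (hmemI i.1 i.2)).1) hT
        ⟨a, ha⟩ ⟨b, hb⟩ ⟨x, hxc⟩
      simpa [Matrix.transpose_apply] using this
  · intro h
    constructor
    · apply rank_le_one_of_rows_eq
      rintro ⟨i, hi⟩ ⟨i', hi'⟩ ⟨j, hj⟩
      simp only [Matrix.submatrix_apply]
      rcases eq_or_ne j v with rfl | hjv
      · rw [(hnorm i (hmemI i hi)).2, (hnorm i' (hmemI i' hi')).2]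
      · exact (h i hi i' hi' j (Finset.mem_sdiff.mpr
          ⟨by simpa using hjv, Finset.mem_compl.mp hj⟩)).1
    · rw [show subRank A Iᶜ I = ((A.submatrix (fun i : {a // a ∈ Iᶜ} => i.1)
          (fun j : {a // a ∈ I} => j.1))ᵀ).rank from (Matrix.rank_transpose _).symm]
      apply rank_le_one_of_rows_eq
      rintro ⟨i, hi⟩ ⟨i', hi'⟩ ⟨j, hj⟩
      simp only [Matrix.transpose_apply, Matrix.submatrix_apply]
      rcases eq_or_ne j v with rfl | hjv
      · rw [(hnorm i (hmemI i hi)).1, (hnorm i' (hmemI i' hi')).1]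
      · exact (h i hi i' hi' j (Finset.mem_sdiff.mpr
          ⟨by simpa using hjv, Finset.mem_compl.mp hj⟩)).2
end

section
/- Let A be an invertible n×n matrix over a field and suppose B = A⁻¹. For any partition {X,Y} of [n], {X,Y} is an HL-bipartition of A if and only if it is an HL-bipartition of B. -/
open Matrix Finset

section Aux

variable {n : ℕ} {K : Type*} [Field K]

private lemma extend_inj (Y : Finset (Fin n)) :
    Function.Injective (Function.ExtendByZero.linearMap K (fun j : {a // a ∈ Y} => j.1)) := by
  intro v w h
  funext j
  have := congrFun h j.1
  simpa [Function.Injective.extend_apply Subtype.val_injective] using this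

private lemma submatrixMulVecLinEq (A : Matrix (Fin n) (Fin n) K) (X Y : Finset (Fin n)) :
    (A.submatrix (fun i : {a // a ∈ X} => i.1) (fun j : {a // a ∈ Y} => j.1)).mulVecLin =
      (LinearMap.funLeft K K (fun i : {a // a ∈ X} => i.1)) ∘ₗ A.mulVecLin ∘ₗ
        (Function.ExtendByZero.linearMap K (fun j : {a // a ∈ Y} => j.1)) := by
  ext v i
  simp only [Matrix.mulVecLin_apply, LinearMap.comp_apply, LinearMap.funLeft_apply,
    Function.ExtendByZero.linearMap_apply, Matrix.mulVec, dotProduct,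
    Matrix.submatrix_apply]
  classical
  rw [← Finset.sum_subset (Finset.subset_univ ((Finset.univ : Finset {a // a ∈ Y}).image
      (fun j : {a // a ∈ Y} => j.1)))]
  · rw [Finset.sum_image (by intro a _ b _ h; exact Subtype.val_injective h)]
    congr 1
    funext j
    rw [Function.Injective.extend_apply Subtype.val_injective]
  · intro k _ hk
    rw [Function.extend_apply' _ _ _ (by
      rintro ⟨j, rfl⟩
      exact hk (Finset.mem_image.2 ⟨j, Finset.mem_univ _, rfl⟩))]
    simp

private lemma ker_funLeft (X : Finset (Fin n)) :
    LinearMap.ker (LinearMap.funLeft K K (fun i : {a // a ∈ X} => i.1)) =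
      LinearMap.range (Function.ExtendByZero.linearMap K (fun j : {a // a ∈ Xᶜ} => j.1)) := by
  classical
  ext w
  simp only [LinearMap.mem_ker, LinearMap.mem_range, Function.ExtendByZero.linearMap_apply]
  constructor
  · intro h
    refine ⟨fun j => w j.1, ?_⟩
    funext k
    simp only [Function.ExtendByZero.linearMap_apply]
    by_cases hk : k ∈ Xᶜ
    · exact Function.Injective.extend_apply Subtype.val_injective
        (fun j : {a // a ∈ Xᶜ} => w j.1) 0 ⟨k, hk⟩
    · have hkX : k ∈ X := by simpa using hk
      have h2 := congrFun h ⟨k, hkX⟩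
      rw [Function.extend_apply' _ _ _ (by
        rintro ⟨j, rfl⟩
        exact hk j.2)]
      exact h2.symm
  · rintro ⟨v, rfl⟩
    funext i
    simp only [LinearMap.funLeft_apply, Function.ExtendByZero.linearMap_apply]
    rw [Function.extend_apply' _ _ _ (by
      rintro ⟨j, hj⟩
      have h2 := j.2
      rw [hj] at h2
      simp only [Finset.mem_compl] at h2
      exact h2 i.2)]
    rfl

private lemma subRank_eq (A : Matrix (Fin n) (Fin n) K) (hA : IsUnit A) (X : Finset (Fin n)) :
    subRank A X Xᶜ + Module.finrank K
        (((LinearMap.range (Function.ExtendByZero.linearMap K (fun j : {a // a ∈ Xᶜ} => j.1))) ⊓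
          Submodule.map A.mulVecLin
            (LinearMap.range (Function.ExtendByZero.linearMap K (fun j : {a // a ∈ Xᶜ} => j.1))) :
            Submodule K (Fin n → K))) =
      Fintype.card {a // a ∈ Xᶜ} := by
  classical
  set ι := Function.ExtendByZero.linearMap K (fun j : {a // a ∈ Xᶜ} => j.1) with hι
  set p := LinearMap.funLeft K K (fun i : {a // a ∈ X} => i.1) with hp
  set g := A.mulVecLin ∘ₗ ι with hg
  have hdet : IsUnit A.det := (Matrix.isUnit_iff_isUnit_det A).mp hA
  have hAinj : Function.Injective A.mulVecLin := by
    have hli : Function.LeftInverse A⁻¹.mulVecLin A.mulVecLin := fun x => by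
      simp [Matrix.mulVec_mulVec, Matrix.nonsing_inv_mul A hdet]
    exact hli.injective
  have hginj : Function.Injective g := hAinj.comp (extend_inj X ᶜ)
  have h1 : subRank A X Xᶜ = Module.finrank K (LinearMap.range (p ∘ₗ g)) := by
    rw [subRank, Matrix.rank, submatrixMulVecLinEq]
  have hrn := LinearMap.finrank_range_add_finrank_ker (p ∘ₗ g)
  have hker : LinearMap.ker (p ∘ₗ g) = Submodule.comap g (LinearMap.ker p) :=
    LinearMap.ker_comp g p
  have hmap : Submodule.map g (LinearMap.ker (p ∘ₗ g)) =
      LinearMap.ker p ⊓ LinearMap.range g := by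
    rw [hker, Submodule.map_comap_eq, inf_comm]
  have hfr : Module.finrank K (LinearMap.ker (p ∘ₗ g)) =
      Module.finrank K ((LinearMap.ker p ⊓ LinearMap.range g : Submodule K (Fin n → K))) := by
    rw [← hmap]
    exact (Submodule.equivMapOfInjective g hginj _).finrank_eq
  have hrange : LinearMap.range g = Submodule.map A.mulVecLin (LinearMap.range ι) :=
    LinearMap.range_comp ι A.mulVecLin
  have hkerp : LinearMap.ker p = LinearMap.range ι := ker_funLeft X
  have hpi : Module.finrank K ({a // a ∈ Xᶜ} → K) = Fintype.card {a // a ∈ Xᶜ} :=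
    Module.finrank_pi K
  rw [h1, ← hpi, ← hrn, hfr, hkerp, hrange]

private lemma subRank_inv (A : Matrix (Fin n) (Fin n) K) (hA : IsUnit A) (X : Finset (Fin n)) :
    subRank A X Xᶜ = subRank A⁻¹ X Xᶜ := by
  classical
  have hdet : IsUnit A.det := (Matrix.isUnit_iff_isUnit_det A).mp hA
  have hA' : IsUnit A⁻¹ := Matrix.isUnit_nonsing_inv_iff.mpr hA
  set R := LinearMap.range (Function.ExtendByZero.linearMap K (fun j : {a // a ∈ Xᶜ} => j.1))
    with hR
  set e : (Fin n → K) ≃ₗ[K] (Fin n → K) := LinearEquiv.ofLinear A.mulVecLin A⁻¹.mulVecLin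
    (by rw [← Matrix.mulVecLin_mul, Matrix.mul_nonsing_inv A hdet, Matrix.mulVecLin_one])
    (by rw [← Matrix.mulVecLin_mul, Matrix.nonsing_inv_mul A hdet, Matrix.mulVecLin_one])
    with he
  have hmapA : Submodule.map A.mulVecLin R = Submodule.map (e : (Fin n → K) →ₗ[K] _) R := rfl
  have hmapB : Submodule.map A⁻¹.mulVecLin R =
      Submodule.map (e.symm : (Fin n → K) →ₗ[K] _) R := rfl
  have key : Module.finrank K ((R ⊓ Submodule.map A.mulVecLin R : Submodule K (Fin n → K))) =
      Module.finrank K ((R ⊓ Submodule.map A⁻¹.mulVecLin R : Submodule K (Fin n → K))) := by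
    rw [hmapA, hmapB]
    have hms : Submodule.map (e : (Fin n → K) →ₗ[K] _)
        (R ⊓ Submodule.map (e.symm : (Fin n → K) →ₗ[K] _) R) =
        Submodule.map (e : (Fin n → K) →ₗ[K] _) R ⊓ R := by
      rw [Submodule.map_inf (e : (Fin n → K) →ₗ[K] Fin n → K)
        (show Function.Injective ⇑(e : (Fin n → K) →ₗ[K] Fin n → K) from e.injective)]
      congr 1
      ext x
      simp only [Submodule.mem_map]
      constructor
      · rintro ⟨y, ⟨z, hz, rfl⟩, rfl⟩
        simpa using hz
      · intro hx
        exact ⟨e.symm x, ⟨x, hx, rfl⟩, by simp⟩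
    calc Module.finrank K ((R ⊓ Submodule.map (e : (Fin n → K) →ₗ[K] _) R
          : Submodule K (Fin n → K)))
        = Module.finrank K ((Submodule.map (e : (Fin n → K) →ₗ[K] _) R ⊓ R
          : Submodule K (Fin n → K))) := by rw [inf_comm]
      _ = Module.finrank K ((Submodule.map (e : (Fin n → K) →ₗ[K] _)
          (R ⊓ Submodule.map (e.symm : (Fin n → K) →ₗ[K] _) R) : Submodule K (Fin n → K))) := by
          rw [hms]
      _ = Module.finrank K ((R ⊓ Submodule.map (e.symm : (Fin n → K) →ₗ[K] _) R
          : Submodule K (Fin n → K))) := (LinearEquiv.finrank_map_eq e _)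
  have e1 := subRank_eq A hA X
  have e2 := subRank_eq A⁻¹ hA' X
  rw [← hR] at e1 e2
  rw [key] at e1
  omega

end Aux

/-- If `A` is invertible with inverse `B`, then for any partition `{X, Xᶜ}` of `[n]`,
`{X, Xᶜ}` is an HL-bipartition of `A` iff it is an HL-bipartition of `B`. -/
theorem HL_bipartition_iff_inverse {n : ℕ} {K : Type*} [Field K]
    (A B : Matrix (Fin n) (Fin n) K) (hA : IsUnit A) (hB : B = A⁻¹)
    (X : Finset (Fin n)) (hX : X.Nonempty) (hXc : Xᶜ.Nonempty) :
    (subRank A X Xᶜ ≤ 1 ∧ subRank A Xᶜ X ≤ 1) ↔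
      (subRank B X Xᶜ ≤ 1 ∧ subRank B Xᶜ X ≤ 1) := by
  subst hB
  have h1 := subRank_inv A hA X
  have h2 := subRank_inv A hA Xᶜ
  rw [compl_compl] at h2
  rw [h1, h2]
end

section
/- Let A be a diagonal-less matrix obtained from a symmetric labelled 2-structure, i.e., A is an n×n symmetric matrix. If X and X' are clans of g_A that overlap (X∩X', X∖X', X'∖X all nonempty), then the symmetric difference X Δ X' is also a clan of g_A. -/
open Matrix Set

/-- `X` is a clan of the labelled 2-structure `g_A` associated to the matrix `A`. -/
def IsClanOfMatrix {n : ℕ} {α : Type*} (A : Matrix (Fin n) (Fin n) α) (X : Set (Fin n)) :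
    Prop :=
  ∀ a ∈ X, ∀ b ∈ X, ∀ x ∉ X, A a x = A b x ∧ A x a = A x b

/-- If `A` is a symmetric `n × n` matrix and `X`, `X'` are overlapping clans of the
(symmetric) labelled 2-structure `g_A`, then the symmetric difference `X Δ X'` is also a
clan of `g_A`. -/
theorem symmDiff_clan_of_symmetric {n : ℕ} {α : Type*} (A : Matrix (Fin n) (Fin n) α)
    (hsymm : A.IsSymm) (X X' : Set (Fin n))
    (hX : IsClanOfMatrix A X) (hX' : IsClanOfMatrix A X')
    (hov : (X ∩ X').Nonempty ∧ (X \ X').Nonempty ∧ (X' \ X).Nonempty) :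
    IsClanOfMatrix A (symmDiff X X') := by
  obtain ⟨⟨c, hcX, hcX'⟩, ⟨d, hdX, hdX'⟩, ⟨e, heX', heX⟩⟩ := hov
  -- key: the value from any element of the symmetric difference to any outside point
  -- is independent of the element
  have key : ∀ a ∈ symmDiff X X', ∀ b ∈ symmDiff X X', ∀ x ∉ symmDiff X X',
      A a x = A b x := by
    intro a ha b hb x hx
    rw [Set.mem_symmDiff] at ha hb hx
    push_neg at hx
    rcases ha with ⟨haX, haX'⟩ | ⟨haX', haX⟩ <;>
      rcases hb with ⟨hbX, hbX'⟩ | ⟨hbX', hbX⟩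
    · -- a, b ∈ X \ X'
      by_cases hxX : x ∈ X
      · have hxX' : x ∈ X' := by tauto
        calc A a x = A a e := (hX' x hxX' e heX' a haX').2
          _ = A b e := (hX a haX b hbX e heX).1
          _ = A b x := ((hX' x hxX' e heX' b hbX').2).symm
      · exact (hX a haX b hbX x hxX).1
    · -- a ∈ X \ X', b ∈ X' \ X
      by_cases hxX : x ∈ X
      · have hxX' : x ∈ X' := by tauto
        calc A a x = A a b := (hX' x hxX' b hbX' a haX').2
          _ = A x b := ((hX x hxX a haX b hbX).1).symm
          _ = A b x := (hsymm.apply x b).symm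
      · have hxX' : x ∉ X' := by tauto
        calc A a x = A c x := (hX a haX c hcX x hxX).1
          _ = A b x := (hX' c hcX' b hbX' x hxX').1
    · -- a ∈ X' \ X, b ∈ X \ X'
      by_cases hxX : x ∈ X
      · have hxX' : x ∈ X' := by tauto
        calc A a x = A x a := (hsymm.apply x a).symm ▸ rfl
          _ = A b a := (hX x hxX b hbX a haX).1
          _ = A b x := ((hX' x hxX' a haX' b hbX').2).symm
      · have hxX' : x ∉ X' := by tauto
        calc A a x = A c x := (hX' a haX' c hcX' x hxX').1
          _ = A b x := (hX c hcX b hbX x hxX).1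
    · -- a, b ∈ X' \ X
      by_cases hxX' : x ∈ X'
      · have hxX : x ∈ X := by tauto
        calc A a x = A a d := (hX x hxX d hdX a haX).2
          _ = A b d := (hX' a haX' b hbX' d hdX').1
          _ = A b x := ((hX x hxX d hdX b hbX).2).symm
      · exact (hX' a haX' b hbX' x hxX').1
  intro a ha b hb x hx
  refine ⟨key a ha b hb x hx, ?_⟩
  calc A x a = A a x := by rw [hsymm.apply]
    _ = A b x := key a ha b hb x hx
    _ = A x b := by rw [hsymm.apply]
end

section
/- Let g be a labelled 2-structure on a set V. If X and Y are clans of g that overlap, then X∩Y, X∖Y, Y∖X, and X∪Y are all clans of g. -/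
open Set

/-- `X` is a clan of the labelled 2-structure `g` on `V`. -/
def IsClan {V L : Type*} (g : V → V → L) (X : Set V) : Prop :=
  ∀ a ∈ X, ∀ b ∈ X, ∀ x ∉ X, g a x = g b x ∧ g x a = g x b

/-- If `X` and `Y` are overlapping clans of a labelled 2-structure `g` on `V`, then
`X ∩ Y`, `X \ Y`, `Y \ X` and `X ∪ Y` are clans of `g`. -/
theorem clan_overlap_closure {V L : Type*} (g : V → V → L) (X Y : Set V)
    (hX : IsClan g X) (hY : IsClan g Y)
    (hov : (X ∩ Y).Nonempty ∧ (X \ Y).Nonempty ∧ (Y \ X).Nonempty) :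
    IsClan g (X ∩ Y) ∧ IsClan g (X \ Y) ∧ IsClan g (Y \ X) ∧ IsClan g (X ∪ Y) := by
  obtain ⟨⟨w, hwX, hwY⟩, ⟨p, hpX, hpY⟩, ⟨q, hqY, hqX⟩⟩ := hov
  refine ⟨?_, ?_, ?_, ?_⟩
  · intro a ha b hb x hx
    by_cases hxX : x ∈ X
    · have hxY : x ∉ Y := fun h => hx ⟨hxX, h⟩
      exact hY a ha.2 b hb.2 x hxY
    · exact hX a ha.1 b hb.1 x hxX
  · rintro a ⟨haX, haY⟩ b ⟨hbX, hbY⟩ x hx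
    by_cases hxX : x ∈ X
    · have hxY : x ∈ Y := by by_contra h; exact hx ⟨hxX, h⟩
      have h1 := hY x hxY q hqY a haY
      have h2 := hY x hxY q hqY b hbY
      have h3 := hX a haX b hbX q hqX
      exact ⟨h1.2.trans (h3.1.trans h2.2.symm), h1.1.trans (h3.2.trans h2.1.symm)⟩
    · exact hX a haX b hbX x hxX
  · rintro a ⟨haY, haX⟩ b ⟨hbY, hbX⟩ x hx
    by_cases hxY : x ∈ Y
    · have hxX : x ∈ X := by by_contra h; exact hx ⟨hxY, h⟩
      have h1 := hX x hxX p hpX a haX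
      have h2 := hX x hxX p hpX b hbX
      have h3 := hY a haY b hbY p hpY
      exact ⟨h1.2.trans (h3.1.trans h2.2.symm), h1.1.trans (h3.2.trans h2.1.symm)⟩
    · exact hY a haY b hbY x hxY
  · intro a ha b hb x hx
    have hxX : x ∉ X := fun h => hx (Or.inl h)
    have hxY : x ∉ Y := fun h => hx (Or.inr h)
    rcases ha with haX | haY <;> rcases hb with hbX | hbY
    · exact hX a haX b hbX x hxX
    · have h1 := hX a haX w hwX x hxX
      have h2 := hY w hwY b hbY x hxY
      exact ⟨h1.1.trans h2.1, h1.2.trans h2.2⟩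
    · have h1 := hY a haY w hwY x hxY
      have h2 := hX w hwX b hbX x hxX
      exact ⟨h1.1.trans h2.1, h1.2.trans h2.2⟩
    · exact hY a haY b hbY x hxY
end

section
/- If A is a symmetric irreducible n×n matrix over a field K, then the family of HL-bipartitions of A is bipartitive; in particular, for any two overlapping HL-bipartitions {X,Y} and {X',Y'} of A, the bipartition {X Δ X', X Δ Y'} is again an HL-bipartition of A. -/
open Matrix Finset

section RankOne
set_option linter.unusedSectionVars false
variable {K : Type*} [Field K] {m m' : Type*} [Fintype m] [Fintype m'] [DecidableEq m] [DecidableEq m']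

lemma minor_eq_of_rank_le_one (M : Matrix m m' K) (h : M.rank ≤ 1) (i i' : m) (j j' : m') :
    M i j * M i' j' = M i' j * M i j' := by
  have hcol : ∀ c : m', (fun r => M r c) ∈ LinearMap.range M.mulVecLin := by
    intro c
    exact ⟨Pi.single c 1, by ext r; simp [Matrix.mulVecLin_apply, Matrix.mulVec_single]⟩
  by_cases hdep : LinearIndependent K ![fun r => M r j, fun r => M r j']
  · exfalso
    have hle : Submodule.span K (Set.range ![fun r => M r j, fun r => M r j'])
        ≤ LinearMap.range M.mulVecLin := by
      rw [Submodule.span_le]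
      rintro x ⟨c, rfl⟩
      fin_cases c <;> simpa using hcol _
    have h2 : Module.finrank K (Submodule.span K
        (Set.range ![fun r => M r j, fun r => M r j'])) = 2 := by
      rw [finrank_span_eq_card hdep]; simp
    have := Submodule.finrank_mono hle
    rw [h2] at this
    have : (2 : ℕ) ≤ 1 := this.trans h
    omega
  · obtain ⟨g, hsum, c, hc⟩ := Fintype.not_linearIndependent_iff.mp hdep
    have hg : ∀ r, g 0 * M r j + g 1 * M r j' = 0 := by
      intro r
      have := congrFun hsum r
      simpa [Fin.sum_univ_two] using this
    have hc' : g 0 ≠ 0 ∨ g 1 ≠ 0 := by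
      fin_cases c
      · exact Or.inl hc
      · exact Or.inr hc
    rcases hc' with h0 | h1
    · have key : g 0 * (M i j * M i' j') = g 0 * (M i' j * M i j') := by
        linear_combination M i' j' * hg i - M i j' * hg i'
      exact mul_left_cancel₀ h0 key
    · have key : g 1 * (M i j * M i' j') = g 1 * (M i' j * M i j') := by
        linear_combination M i j * hg i' - M i' j * hg i
      exact mul_left_cancel₀ h1 key

lemma rank_le_one_of_minors (M : Matrix m m' K)
    (h : ∀ i i' j j', M i j * M i' j' = M i' j * M i j') : M.rank ≤ 1 := by
  by_cases h0 : ∀ i j, M i j = 0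
  · have hM : M = 0 := by ext i j; exact h0 i j
    simp [hM]
  push_neg at h0
  obtain ⟨i0, j0, hM⟩ := h0
  have hw : (fun r => M r j0) ≠ (0 : m → K) := by
    intro hc; exact hM (congrFun hc i0)
  have hrange : LinearMap.range M.mulVecLin ≤ Submodule.span K {fun r => M r j0} := by
    rintro x ⟨y, rfl⟩
    rw [Submodule.mem_span_singleton]
    refine ⟨(∑ j, M i0 j * y j) / M i0 j0, ?_⟩
    ext r
    simp only [Pi.smul_apply, smul_eq_mul, Matrix.mulVecLin_apply, Matrix.mulVec, dotProduct]
    rw [div_mul_eq_mul_div, div_eq_iff hM]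
    rw [Finset.sum_mul, Finset.sum_mul]
    apply Finset.sum_congr rfl
    intro j _
    linear_combination y j * h i0 r j j0
  calc M.rank ≤ Module.finrank K (Submodule.span K {fun r => M r j0}) :=
        Submodule.finrank_mono hrange
    _ = 1 := finrank_span_singleton hw

end RankOne

/-- `{X, Xᶜ}` is an HL-bipartition of `A`. -/
def IsHLBipartition {n : ℕ} {K : Type*} [Field K] (A : Matrix (Fin n) (Fin n) K)
    (X : Finset (Fin n)) : Prop :=
  X.Nonempty ∧ Xᶜ.Nonempty ∧ subRank A X Xᶜ ≤ 1 ∧ subRank A Xᶜ X ≤ 1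

/-- The bipartitions `{X, Xᶜ}` and `{X', X'ᶜ}` overlap. -/
def FinsetBipartitionsOverlap {n : ℕ} (X X' : Finset (Fin n)) : Prop :=
  (X ∩ X').Nonempty ∧ (X ∩ X'ᶜ).Nonempty ∧ (Xᶜ ∩ X').Nonempty ∧ (Xᶜ ∩ X'ᶜ).Nonempty

section Helpers
variable {n : ℕ} {K : Type*} [Field K]

lemma subRank_le_one_iff (A : Matrix (Fin n) (Fin n) K) (S T : Finset (Fin n)) :
    subRank A S T ≤ 1 ↔
      ∀ i ∈ S, ∀ i' ∈ S, ∀ j ∈ T, ∀ j' ∈ T, A i j * A i' j' = A i' j * A i j' := by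
  constructor
  · intro h i hi i' hi' j hj j' hj'
    exact minor_eq_of_rank_le_one _ h ⟨i, hi⟩ ⟨i', hi'⟩ ⟨j, hj⟩ ⟨j', hj'⟩
  · intro h
    exact rank_le_one_of_minors _ fun i i' j j' => h i.1 i.2 i'.1 i'.2 j.1 j.2 j'.1 j'.2

lemma subRank_comm {A : Matrix (Fin n) (Fin n) K} (hsymm : A.IsSymm) (S T : Finset (Fin n)) :
    subRank A S T = subRank A T S := by
  unfold subRank
  rw [← Matrix.rank_transpose, Matrix.transpose_submatrix, hsymm]

lemma isHL_compl {A : Matrix (Fin n) (Fin n) K} {X : Finset (Fin n)}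
    (h : IsHLBipartition A X) : IsHLBipartition A Xᶜ := by
  obtain ⟨h1, h2, h3, h4⟩ := h
  refine ⟨h2, by simpa using h1, by simpa using h4, by simpa using h3⟩

lemma overlap_compl_left {X X' : Finset (Fin n)} (h : FinsetBipartitionsOverlap X X') :
    FinsetBipartitionsOverlap Xᶜ X' :=
  ⟨h.2.2.1, h.2.2.2, by simpa using h.1, by simpa using h.2.1⟩

lemma overlap_compl_right {X X' : Finset (Fin n)} (h : FinsetBipartitionsOverlap X X') :
    FinsetBipartitionsOverlap X X'ᶜ :=
  ⟨h.2.1, by simpa using h.1, h.2.2.2, by simpa using h.2.2.1⟩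

lemma hl_inter (A : Matrix (Fin n) (Fin n) K) (hsymm : A.IsSymm)
    (hirr : ∀ X : Finset (Fin n), X.Nonempty → X ≠ Finset.univ →
      A.submatrix (fun i : {a // a ∈ X} => i.1) (fun j : {a // a ∈ Xᶜ} => j.1) ≠ 0 ∧
      A.submatrix (fun i : {a // a ∈ Xᶜ} => i.1) (fun j : {a // a ∈ X} => j.1) ≠ 0)
    {X X' : Finset (Fin n)} (hX : IsHLBipartition A X) (hX' : IsHLBipartition A X')
    (hov : FinsetBipartitionsOverlap X X') : IsHLBipartition A (X ∩ X') := by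
  obtain ⟨o1, o2, o3, o4⟩ := hov
  have hApp : ∀ i j : Fin n, A j i = A i j := fun i j => hsymm.apply i j
  have hXr := (subRank_le_one_iff A X Xᶜ).mp hX.2.2.1
  have hX'r := (subRank_le_one_iff A X' X'ᶜ).mp hX'.2.2.1
  have cross : ∀ i ∈ X ∩ X', ∀ i' ∈ X ∩ X', ∀ j, j ∉ X → j ∈ X' → ∀ j', j' ∈ X → j' ∉ X' →
      A i j * A i' j' = A i' j * A i j' := by
    intro i hi i' hi' j hjX hjX' j' hj'X hj'X'
    obtain ⟨hiX, hiX'⟩ := Finset.mem_inter.mp hi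
    obtain ⟨hi'X, hi'X'⟩ := Finset.mem_inter.mp hi'
    by_cases h4 : ∀ s ∈ X ∩ X', ∀ t, t ∉ X → t ∉ X' → A s t = 0
    · by_cases hz1 : A i j = 0 ∧ A i' j = 0
      · rw [hz1.1, hz1.2]; ring
      by_cases hz2 : A i j' = 0 ∧ A i' j' = 0
      · rw [hz2.1, hz2.2]; ring
      exfalso
      have hex1 : ∃ i1, i1 ∈ X ∩ X' ∧ A i1 j ≠ 0 := by
        rcases not_and_or.mp hz1 with h | h
        · exact ⟨i, hi, h⟩
        · exact ⟨i', hi', h⟩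
      have hex2 : ∃ i2, i2 ∈ X ∩ X' ∧ A i2 j' ≠ 0 := by
        rcases not_and_or.mp hz2 with h | h
        · exact ⟨i, hi, h⟩
        · exact ⟨i', hi', h⟩
      obtain ⟨i1, hi1, hA1⟩ := hex1
      obtain ⟨i2, hi2, hA2⟩ := hex2
      have hP4ne : (Xᶜ ∩ X'ᶜ).Nonempty := o4
      have hP4univ : Xᶜ ∩ X'ᶜ ≠ Finset.univ := by
        intro hc
        have hmem : i ∈ Xᶜ ∩ X'ᶜ := hc ▸ Finset.mem_univ i
        rw [Finset.mem_inter, Finset.mem_compl] at hmem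
        exact hmem.1 hiX
      apply (hirr (Xᶜ ∩ X'ᶜ) hP4ne hP4univ).1
      ext ⟨s, hs⟩ ⟨t, ht⟩
      rw [Finset.mem_inter, Finset.mem_compl, Finset.mem_compl] at hs
      simp only [Finset.mem_compl, Finset.mem_inter, Finset.mem_compl, not_and, not_not] at ht
      simp only [Matrix.submatrix_apply, Matrix.zero_apply]
      by_cases htX : t ∈ X
      · by_cases htX' : t ∈ X'
        · rw [hApp t s]
          exact h4 t (Finset.mem_inter.mpr ⟨htX, htX'⟩) s hs.1 hs.2
        · have e := hXr t htX i1 (Finset.mem_inter.mp hi1).1 s (Finset.mem_compl.mpr hs.1)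
            j (Finset.mem_compl.mpr hjX)
          have hi1s : A i1 s = 0 := h4 i1 hi1 s hs.1 hs.2
          rw [hi1s, zero_mul] at e
          have hts : A t s = 0 := by
            rcases mul_eq_zero.mp e with h | h
            · exact h
            · exact absurd h hA1
          rw [hApp t s]; exact hts
      · have htX' : t ∈ X' := ht htX
        have e := hX'r t htX' i2 (Finset.mem_inter.mp hi2).2 s (Finset.mem_compl.mpr hs.2)
          j' (Finset.mem_compl.mpr hj'X')
        have hi2s : A i2 s = 0 := h4 i2 hi2 s hs.1 hs.2
        rw [hi2s, zero_mul] at e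
        have hts : A t s = 0 := by
          rcases mul_eq_zero.mp e with h | h
          · exact h
          · exact absurd h hA2
        rw [hApp t s]; exact hts
    · push_neg at h4
      obtain ⟨i0, hi0, t, htX, htX', ht0⟩ := h4
      obtain ⟨hi0X, hi0X'⟩ := Finset.mem_inter.mp hi0
      have e1 := hXr i hiX i0 hi0X j (Finset.mem_compl.mpr hjX) t (Finset.mem_compl.mpr htX)
      have e2 := hXr i' hi'X i0 hi0X j (Finset.mem_compl.mpr hjX) t (Finset.mem_compl.mpr htX)
      have e3 := hX'r i hiX' i0 hi0X' j' (Finset.mem_compl.mpr hj'X') t (Finset.mem_compl.mpr htX')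
      have e4 := hX'r i' hi'X' i0 hi0X' j' (Finset.mem_compl.mpr hj'X') t (Finset.mem_compl.mpr htX')
      have key : (A i j * A i' j') * (A i0 t * A i0 t)
          = (A i' j * A i j') * (A i0 t * A i0 t) := by
        linear_combination (A i' j' * A i0 t) * e1 + (A i0 j * A i t) * e4
          - (A i j' * A i0 t) * e2 - (A i0 j * A i' t) * e3
      exact mul_right_cancel₀ (mul_ne_zero ht0 ht0) key
  have key : ∀ i ∈ X ∩ X', ∀ i' ∈ X ∩ X', ∀ j ∈ (X ∩ X')ᶜ, ∀ j' ∈ (X ∩ X')ᶜ,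
      A i j * A i' j' = A i' j * A i j' := by
    intro i hi i' hi' j hj j' hj'
    obtain ⟨hiX, hiX'⟩ := Finset.mem_inter.mp hi
    obtain ⟨hi'X, hi'X'⟩ := Finset.mem_inter.mp hi'
    rw [Finset.mem_compl, Finset.mem_inter, not_and_or] at hj hj'
    rcases hj with hjX | hjX'
    · rcases hj' with hj'X | hj'X'
      · exact hXr i hiX i' hi'X j (Finset.mem_compl.mpr hjX) j' (Finset.mem_compl.mpr hj'X)
      · by_cases hjX' : j ∈ X'
        · by_cases hj'X : j' ∈ X
          · exact cross i hi i' hi' j hjX hjX' j' hj'X hj'X'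
          · exact hXr i hiX i' hi'X j (Finset.mem_compl.mpr hjX) j' (Finset.mem_compl.mpr hj'X)
        · exact hX'r i hiX' i' hi'X' j (Finset.mem_compl.mpr hjX') j' (Finset.mem_compl.mpr hj'X')
    · rcases hj' with hj'X | hj'X'
      · by_cases hjX : j ∈ X
        · by_cases hj'X' : j' ∈ X'
          · have e := cross i hi i' hi' j' hj'X hj'X' j hjX hjX'
            linear_combination -e
          · exact hX'r i hiX' i' hi'X' j (Finset.mem_compl.mpr hjX')
              j' (Finset.mem_compl.mpr hj'X')
        · exact hXr i hiX i' hi'X j (Finset.mem_compl.mpr hjX) j' (Finset.mem_compl.mpr hj'X)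
      · exact hX'r i hiX' i' hi'X' j (Finset.mem_compl.mpr hjX') j' (Finset.mem_compl.mpr hj'X')
  refine ⟨o1, ?_, (subRank_le_one_iff A _ _).mpr key, ?_⟩
  · obtain ⟨z, hz⟩ := o4
    rw [Finset.mem_inter, Finset.mem_compl, Finset.mem_compl] at hz
    exact ⟨z, by rw [Finset.mem_compl, Finset.mem_inter]; tauto⟩
  · rw [subRank_comm hsymm]
    exact (subRank_le_one_iff A _ _).mpr key

end Helpers

section SymmDiff
variable {n : ℕ} {K : Type*} [Field K]

set_option maxHeartbeats 2000000 in
lemma hl_symmDiff (A : Matrix (Fin n) (Fin n) K) (hsymm : A.IsSymm)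
    (hirr : ∀ X : Finset (Fin n), X.Nonempty → X ≠ Finset.univ →
      A.submatrix (fun i : {a // a ∈ X} => i.1) (fun j : {a // a ∈ Xᶜ} => j.1) ≠ 0 ∧
      A.submatrix (fun i : {a // a ∈ Xᶜ} => i.1) (fun j : {a // a ∈ X} => j.1) ≠ 0)
    {X X' : Finset (Fin n)} (hX : IsHLBipartition A X) (hX' : IsHLBipartition A X')
    (hov : FinsetBipartitionsOverlap X X') : IsHLBipartition A (symmDiff X X') := by
  have hApp : ∀ i j : Fin n, A j i = A i j := fun i j => hsymm.apply i j
  have hXr := (subRank_le_one_iff A X Xᶜ).mp hX.2.2.1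
  have hX'r := (subRank_le_one_iff A X' X'ᶜ).mp hX'.2.2.1
  have hP1 := hl_inter A hsymm hirr hX hX' hov
  have hP2 := hl_inter A hsymm hirr hX (isHL_compl hX') (overlap_compl_right hov)
  have hP3 := hl_inter A hsymm hirr (isHL_compl hX) hX' (overlap_compl_left hov)
  have hP4 := hl_inter A hsymm hirr (isHL_compl hX) (isHL_compl hX')
    (overlap_compl_left (overlap_compl_right hov))
  have hP1c := (subRank_le_one_iff A (X ∩ X')ᶜ (X ∩ X')).mp hP1.2.2.2
  have hP4c := (subRank_le_one_iff A (Xᶜ ∩ X'ᶜ)ᶜ (Xᶜ ∩ X'ᶜ)).mp hP4.2.2.2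
  have hP2r := (subRank_le_one_iff A (X ∩ X'ᶜ) (X ∩ X'ᶜ)ᶜ).mp hP2.2.2.1
  have hP3r := (subRank_le_one_iff A (Xᶜ ∩ X') (Xᶜ ∩ X')ᶜ).mp hP3.2.2.1
  have cross2 : ∀ i2, i2 ∈ X → i2 ∉ X' → ∀ i3, i3 ∉ X → i3 ∈ X' →
      ∀ j1, j1 ∈ X → j1 ∈ X' → ∀ j4, j4 ∉ X → j4 ∉ X' →
      A i2 j1 * A i3 j4 = A i3 j1 * A i2 j4 := by
    intro i2 hi2X hi2X' i3 hi3X hi3X' j1 hj1X hj1X' j4 hj4X hj4X'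
    have e1 := hX'r j1 hj1X' i3 hi3X' i2 (Finset.mem_compl.mpr hi2X')
      j4 (Finset.mem_compl.mpr hj4X')
    have e2 := hXr j1 hj1X i2 hi2X i3 (Finset.mem_compl.mpr hi3X)
      j4 (Finset.mem_compl.mpr hj4X)
    have s1 : A j1 i2 = A i2 j1 := hApp i2 j1
    have s2 : A j1 i3 = A i3 j1 := hApp i3 j1
    have s3 : A i3 i2 = A i2 i3 := hApp i2 i3
    linear_combination e1 - e2 - A i3 j4 * s1 + A i2 j4 * s2 + A j1 j4 * s3
  have key : ∀ i ∈ symmDiff X X', ∀ i' ∈ symmDiff X X',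
      ∀ j ∈ (symmDiff X X')ᶜ, ∀ j' ∈ (symmDiff X X')ᶜ,
      A i j * A i' j' = A i' j * A i j' := by
    intro i hi i' hi' j hj j' hj'
    rw [Finset.mem_symmDiff] at hi hi'
    have hj2 : (j ∈ X ∧ j ∈ X') ∨ (j ∉ X ∧ j ∉ X') := by
      rw [Finset.mem_compl, Finset.mem_symmDiff] at hj; tauto
    have hj'2 : (j' ∈ X ∧ j' ∈ X') ∨ (j' ∉ X ∧ j' ∉ X') := by
      rw [Finset.mem_compl, Finset.mem_symmDiff] at hj'; tauto
    have hiP1c : i ∈ (X ∩ X')ᶜ := by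
      rw [Finset.mem_compl, Finset.mem_inter]; tauto
    have hi'P1c : i' ∈ (X ∩ X')ᶜ := by
      rw [Finset.mem_compl, Finset.mem_inter]; tauto
    have hiP4c : i ∈ (Xᶜ ∩ X'ᶜ)ᶜ := by
      simp only [Finset.mem_compl, Finset.mem_inter, not_and, not_not]; tauto
    have hi'P4c : i' ∈ (Xᶜ ∩ X'ᶜ)ᶜ := by
      simp only [Finset.mem_compl, Finset.mem_inter, not_and, not_not]; tauto
    rcases hj2 with ⟨hjX, hjX'⟩ | ⟨hjX, hjX'⟩
    · rcases hj'2 with ⟨hj'X, hj'X'⟩ | ⟨hj'X, hj'X'⟩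
      · exact hP1c i hiP1c i' hi'P1c j (Finset.mem_inter.mpr ⟨hjX, hjX'⟩)
          j' (Finset.mem_inter.mpr ⟨hj'X, hj'X'⟩)
      · -- j ∈ P1, j' ∈ P4
        rcases hi with ⟨hiX, hiX'⟩ | ⟨hiX', hiX⟩ <;> rcases hi' with ⟨hi'X, hi'X'⟩ | ⟨hi'X', hi'X⟩
        · -- i, i' ∈ P2
          exact hP2r i (Finset.mem_inter.mpr ⟨hiX, Finset.mem_compl.mpr hiX'⟩)
            i' (Finset.mem_inter.mpr ⟨hi'X, Finset.mem_compl.mpr hi'X'⟩)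
            j (by simp only [Finset.mem_compl, Finset.mem_inter, Finset.mem_compl]; tauto)
            j' (by simp only [Finset.mem_compl, Finset.mem_inter, Finset.mem_compl]; tauto)
        · -- i ∈ P2, i' ∈ P3
          exact cross2 i hiX hiX' i' hi'X hi'X' j hjX hjX' j' hj'X hj'X'
        · -- i ∈ P3, i' ∈ P2
          exact (cross2 i' hi'X hi'X' i hiX hiX' j hjX hjX' j' hj'X hj'X').symm
        · -- i, i' ∈ P3
          exact hP3r i (Finset.mem_inter.mpr ⟨Finset.mem_compl.mpr hiX, hiX'⟩)
            i' (Finset.mem_inter.mpr ⟨Finset.mem_compl.mpr hi'X, hi'X'⟩)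
            j (by simp only [Finset.mem_compl, Finset.mem_inter, Finset.mem_compl]; tauto)
            j' (by simp only [Finset.mem_compl, Finset.mem_inter, Finset.mem_compl]; tauto)
    · rcases hj'2 with ⟨hj'X, hj'X'⟩ | ⟨hj'X, hj'X'⟩
      · -- j ∈ P4, j' ∈ P1
        rcases hi with ⟨hiX, hiX'⟩ | ⟨hiX', hiX⟩ <;> rcases hi' with ⟨hi'X, hi'X'⟩ | ⟨hi'X', hi'X⟩
        · exact hP2r i (Finset.mem_inter.mpr ⟨hiX, Finset.mem_compl.mpr hiX'⟩)
            i' (Finset.mem_inter.mpr ⟨hi'X, Finset.mem_compl.mpr hi'X'⟩)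
            j (by simp only [Finset.mem_compl, Finset.mem_inter, Finset.mem_compl]; tauto)
            j' (by simp only [Finset.mem_compl, Finset.mem_inter, Finset.mem_compl]; tauto)
        · have e := cross2 i hiX hiX' i' hi'X hi'X' j' hj'X hj'X' j hjX hjX'
          linear_combination -e
        · have e := cross2 i' hi'X hi'X' i hiX hiX' j' hj'X hj'X' j hjX hjX'
          linear_combination e
        · exact hP3r i (Finset.mem_inter.mpr ⟨Finset.mem_compl.mpr hiX, hiX'⟩)
            i' (Finset.mem_inter.mpr ⟨Finset.mem_compl.mpr hi'X, hi'X'⟩)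
            j (by simp only [Finset.mem_compl, Finset.mem_inter, Finset.mem_compl]; tauto)
            j' (by simp only [Finset.mem_compl, Finset.mem_inter, Finset.mem_compl]; tauto)
      · exact hP4c i hiP4c i' hi'P4c
          j (Finset.mem_inter.mpr ⟨Finset.mem_compl.mpr hjX, Finset.mem_compl.mpr hjX'⟩)
          j' (Finset.mem_inter.mpr ⟨Finset.mem_compl.mpr hj'X, Finset.mem_compl.mpr hj'X'⟩)
  refine ⟨?_, ?_, (subRank_le_one_iff A _ _).mpr key, ?_⟩
  · obtain ⟨z, hz⟩ := hov.2.1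
    rw [Finset.mem_inter, Finset.mem_compl] at hz
    exact ⟨z, Finset.mem_symmDiff.mpr (Or.inl ⟨hz.1, hz.2⟩)⟩
  · obtain ⟨z, hz⟩ := hov.1
    rw [Finset.mem_inter] at hz
    refine ⟨z, Finset.mem_compl.mpr ?_⟩
    rw [Finset.mem_symmDiff]; tauto
  · rw [subRank_comm hsymm]
    exact (subRank_le_one_iff A _ _).mpr key

end SymmDiff

/-- If `A` is a symmetric irreducible `n × n` matrix over a field `K`, then the family of
HL-bipartitions of `A` is bipartitive: it contains all singleton bipartitions, is closed
under the four intersection/union operations on overlapping members, and for any two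
overlapping HL-bipartitions `{X, Xᶜ}` and `{X', X'ᶜ}`, the bipartition
`{X Δ X', (X Δ X')ᶜ}` (note `X Δ X'ᶜ = (X Δ X')ᶜ`) is again an HL-bipartition of `A`. -/
theorem HL_family_bipartitive_of_symmetric {n : ℕ} {K : Type*} [Field K] (hn : 2 ≤ n)
    (A : Matrix (Fin n) (Fin n) K) (hsymm : A.IsSymm)
    (hirr : ∀ X : Finset (Fin n), X.Nonempty → X ≠ Finset.univ →
      A.submatrix (fun i : {a // a ∈ X} => i.1) (fun j : {a // a ∈ Xᶜ} => j.1) ≠ 0 ∧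
      A.submatrix (fun i : {a // a ∈ Xᶜ} => i.1) (fun j : {a // a ∈ X} => j.1) ≠ 0) :
    (∀ v : Fin n, IsHLBipartition A {v}) ∧
      (∀ X X' : Finset (Fin n), IsHLBipartition A X → IsHLBipartition A X' →
        FinsetBipartitionsOverlap X X' →
          IsHLBipartition A (X ∩ X') ∧ IsHLBipartition A (X ∩ X'ᶜ) ∧
            IsHLBipartition A (Xᶜ ∩ X') ∧ IsHLBipartition A (Xᶜ ∩ X'ᶜ)) ∧
      ∀ X X' : Finset (Fin n), IsHLBipartition A X → IsHLBipartition A X' →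
        FinsetBipartitionsOverlap X X' → IsHLBipartition A (symmDiff X X') := by
  refine ⟨?_, ?_, ?_⟩
  · intro v
    have hcne : ({v} : Finset (Fin n))ᶜ.Nonempty := by
      rw [Finset.nonempty_iff_ne_empty]
      intro hc
      rw [Finset.compl_eq_empty_iff] at hc
      have := congrArg Finset.card hc
      simp [Fintype.card_fin] at this
      omega
    refine ⟨⟨v, Finset.mem_singleton_self v⟩, hcne, ?_, ?_⟩
    · rw [subRank_le_one_iff]
      intro i hi i' hi' j _ j' _
      rw [Finset.mem_singleton] at hi hi'
      subst hi; subst hi'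
      ring
    · rw [subRank_le_one_iff]
      intro i _ i' _ j hj j' hj'
      rw [Finset.mem_singleton] at hj hj'
      subst hj; subst hj'
      ring
  · intro X X' hX hX' hov
    exact ⟨hl_inter A hsymm hirr hX hX' hov,
      hl_inter A hsymm hirr hX (isHL_compl hX') (overlap_compl_right hov),
      hl_inter A hsymm hirr (isHL_compl hX) hX' (overlap_compl_left hov),
      hl_inter A hsymm hirr (isHL_compl hX) (isHL_compl hX')
        (overlap_compl_left (overlap_compl_right hov))⟩
  · intro X X' hX hX' hov
    exact hl_symmDiff A hsymm hirr hX hX' hov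
end
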